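/- arXiv:1111.0655 — 6 statements merged into one kernel-verified Lean document; each statement's English description precedes it below -/
import Mathlib

section
/- If f is an irreducible polynomial of prime degree p over a field F of characteristic 0, and every root of f is a rational function over F of a single fixed root, then f is solvable by radicals. -/
/-- Abel's 1829 criterion: if `f` is irreducible of prime degree over a field of
characteristic zero and every root of `f` is a rational function over `F` of a single
fixed root `α`, then `f` is solvable by radicals (its Galois group is solvable). -/
theorem stmt_1 {F : Type*} [Field F] [CharZero F] (p : ℕ) (hp : p.Prime)
    (f : Polynomial F) (hirr : Irreducible f) (hdeg : f.natDegree = p)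
    (α : f.SplittingField) (hα : α ∈ f.rootSet f.SplittingField)
    (hroots : ∀ c ∈ f.rootSet f.SplittingField, c ∈ IntermediateField.adjoin F {α}) :
    IsSolvable f.Gal := by
  have hne : f ≠ 0 := hirr.ne_zero
  have haev : Polynomial.aeval α f = 0 := (Polynomial.mem_rootSet.mp hα).2
  have hint : IsIntegral F α := IsIntegral.of_finite F α
  have hmin : minpoly F α = f * Polynomial.C f.leadingCoeff⁻¹ :=
    (minpoly.eq_of_irreducible hirr haev).symm
  have hlc : f.leadingCoeff ≠ 0 := Polynomial.leadingCoeff_ne_zero.mpr hne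
  have hmindeg : (minpoly F α).natDegree = p := by
    rw [hmin, Polynomial.natDegree_mul_C (inv_ne_zero hlc), hdeg]
  have htop : IntermediateField.adjoin F {α} = ⊤ := by
    rw [← IntermediateField.toSubalgebra_injective.eq_iff,
      IntermediateField.top_toSubalgebra, eq_top_iff,
      ← Polynomial.SplittingField.adjoin_rootSet f, Algebra.adjoin_le_iff]
    exact fun c hc => hroots c hc
  have hfin : Module.finrank F f.SplittingField = p := by
    rw [← IntermediateField.finrank_top', ← htop,
      IntermediateField.adjoin.finrank hint, hmindeg]
  have hcard : Nat.card f.Gal = p := by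
    rw [Nat.card_eq_fintype_card]
    haveI : IsGalois F f.SplittingField := ⟨⟩
    exact (Nat.card_eq_fintype_card.symm.trans (IsGalois.card_aut_eq_finrank F f.SplittingField)).trans hfin
  haveI : Fact p.Prime := ⟨hp⟩
  haveI : IsCyclic f.Gal := isCyclic_of_prime_card hcard
  exact isSolvable_of_comm fun a b =>
    (IsCyclic.commGroup (α := f.Gal)).mul_comm a b
end

section
/- For an irreducible polynomial of prime degree p over a field of characteristic 0, the polynomial is solvable by radicals if and only if its Galois group, viewed as a subgroup of the symmetric group S_p acting on the p roots, is conjugate to a subgroup of the group of affine maps x ↦ ax + b on ℤ/pℤ. -/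
open MulAction Subgroup

/-- A solvable group acting faithfully and transitively on a set of prime cardinality `p`
acts by affine transformations after identifying the set with `ZMod p`. -/
theorem affine_of_solvable {G : Type*} [Group G] {α : Type*} [Fintype α]
    [MulAction G α] [FaithfulSMul G α] [IsPretransitive G α]
    {p : ℕ} (hp : p.Prime) (hcard : Fintype.card α = p) [hsolv : Group.IsSolvable G] :
    ∃ e : α ≃ ZMod p, ∀ g : G, ∃ (a : (ZMod p)ˣ) (b : ZMod p),
      ∀ x : α, e (g • x) = (a : ZMod p) * e x + b := by
  haveI : Fact p.Prime := ⟨hp⟩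
  haveI : Nontrivial α :=
    Fintype.one_lt_card_iff_nontrivial.mp (by rw [hcard]; exact hp.one_lt)
  -- G is nontrivial
  have hGnt : ∃ g : G, g ≠ 1 := by
    obtain ⟨x, y, hxy⟩ := exists_pair_ne α
    obtain ⟨g, hg⟩ := exists_smul_eq G x y
    exact ⟨g, fun h => hxy (by rw [← hg, h, one_smul])⟩
  -- minimal index with trivial derived series
  obtain ⟨n0, hn0⟩ := hsolv.solvable
  have hex : ∃ n, derivedSeries G n = ⊥ := ⟨n0, hn0⟩
  classical
  set n := Nat.find hex with hn
  have hnbot : derivedSeries G n = ⊥ := Nat.find_spec hex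
  have hnne : n ≠ 0 := by
    intro h
    obtain ⟨g, hg⟩ := hGnt
    rw [h, derivedSeries_zero] at hnbot
    exact hg (Subgroup.mem_bot.mp (hnbot ▸ Subgroup.mem_top g))
  set N := derivedSeries G (n - 1) with hN
  have hNbot : N ≠ ⊥ := Nat.find_min hex (Nat.sub_lt (Nat.pos_of_ne_zero hnne) one_pos)
  have hNcomm : ⁅N, N⁆ = ⊥ := by
    have : derivedSeries G (n - 1 + 1) = ⊥ := by
      rw [Nat.sub_add_cancel (Nat.one_le_iff_ne_zero.mpr hnne)]
      exact hnbot
    rwa [derivedSeries_succ] at this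
  haveI hNnormal : N.Normal := derivedSeries_normal G (n - 1)
  -- N is commutative
  have hNc : ∀ a b : G, a ∈ N → b ∈ N → a * b = b * a := by
    intro a b ha hb
    have := Subgroup.commutator_eq_bot_iff_le_centralizer.mp hNcomm ha
    exact (Subgroup.mem_centralizer_iff.mp this b hb).symm
  -- N has a nontrivial element, which moves some point
  obtain ⟨g₀, hg₀⟩ := Subgroup.ne_bot_iff_exists_ne_one.mp hNbot
  have hg₀G : (g₀ : G) ≠ 1 := fun h => hg₀ (Subtype.ext h)
  obtain ⟨x₀, hx₀⟩ : ∃ x : α, (g₀ : G) • x ≠ x := by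
    by_contra h
    push_neg at h
    exact hg₀G (FaithfulSMul.eq_of_smul_eq_smul (fun a => by rw [h a, one_smul]))
  -- N acts transitively: orbit of x₀ is a block of size dividing p and > 1
  have horb : orbit N x₀ = Set.univ := by
    have hblock : IsBlock G (orbit N x₀) := IsBlock.orbit_of_normal x₀
    have hdvd : (orbit N x₀).ncard ∣ Nat.card α :=
      hblock.ncard_dvd_card ⟨x₀, mem_orbit_self x₀⟩
    have hlt : 1 < (orbit N x₀).ncard := by
      exact (Set.one_lt_ncard (Set.toFinite _)).mpr
        ⟨(g₀:G) • x₀, ⟨g₀, rfl⟩, x₀, mem_orbit_self x₀, hx₀⟩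
    have hcard' : Nat.card α = p := by rw [Nat.card_eq_fintype_card, hcard]
    rw [hcard'] at hdvd
    have : (orbit N x₀).ncard = p := ((Nat.Prime.eq_one_or_self_of_dvd hp _ hdvd).resolve_left
      (by omega))
    apply Set.eq_of_subset_of_ncard_le (Set.subset_univ _)
    rw [Set.ncard_univ, hcard', this]
  haveI hNtrans : IsPretransitive N α := by
    constructor
    intro x y
    have hx : x ∈ orbit N x₀ := horb ▸ Set.mem_univ x
    have hy : y ∈ orbit N x₀ := horb ▸ Set.mem_univ y
    obtain ⟨m, rfl⟩ := hx
    obtain ⟨k, rfl⟩ := hy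
    exact ⟨k * m⁻¹, by rw [mul_smul, inv_smul_smul]⟩
  -- N acts freely
  have hfree : ∀ (m : N) (x : α), (m : G) • x = x → m = 1 := by
    intro m x hfix
    have : ∀ y : α, (m : G) • y = y := by
      intro y
      obtain ⟨k, rfl⟩ := exists_smul_eq N x y
      have hk : (k : N) • x = (k : G) • x := rfl
      rw [hk, ← mul_smul, hNc _ _ m.2 k.2, mul_smul, hfix]
    exact Subtype.ext (FaithfulSMul.eq_of_smul_eq_smul
      (fun a => by rw [this a, OneMemClass.coe_one, one_smul]))
  -- N ≃ α, so card N = p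
  have hNbij : Function.Bijective (fun m : N => (m : G) • x₀) := by
    constructor
    · intro m k h
      simp only at h
      have : ((k⁻¹ * m : N) : G) • x₀ = x₀ := by
        rw [Subgroup.coe_mul, mul_smul, h]
        simp
      have := hfree _ _ this
      rwa [inv_mul_eq_one, eq_comm] at this
    · intro y
      obtain ⟨m, hm⟩ := exists_smul_eq N x₀ y
      exact ⟨m, hm⟩
  haveI : Finite N := Finite.of_injective _ hNbij.1
  have hcardN : Nat.card N = p := by
    rw [Nat.card_eq_of_bijective _ hNbij, Nat.card_eq_fintype_card, hcard]
  -- σ := g₀ has order p and generates N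
  set σ : G := (g₀ : G) with hσ
  have horderN : orderOf g₀ = p := by
    have h1 : orderOf g₀ ∣ p := hcardN ▸ orderOf_dvd_natCard g₀
    rcases (Nat.Prime.eq_one_or_self_of_dvd hp _ h1) with h | h
    · exact absurd (orderOf_eq_one_iff.mp h) hg₀
    · exact h
  have horder : orderOf σ = p := by
    rw [← horderN, hσ]
    exact orderOf_injective N.subtype N.subtype_injective g₀
  have hσne : σ ≠ 1 := hg₀G
  have hzpN : Subgroup.zpowers σ = N := by
    apply Subgroup.eq_of_le_of_card_ge ((Subgroup.zpowers_le).mpr g₀.2)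
    rw [hcardN, Nat.card_zpowers, horder]
  -- helper : zpow reduced to pow of val
  have hzval : ∀ z : ℤ, σ ^ z = σ ^ (((z : ZMod p)).val) := by
    intro z
    have : ((((z : ZMod p)).val : ℤ) : ZMod p) = ((z : ℤ) : ZMod p) := by
      push_cast [ZMod.natCast_val, ZMod.cast_id]
      rfl
    have hmod : (((z : ZMod p)).val : ℤ) ≡ z [ZMOD (p : ℕ)] :=
      (ZMod.intCast_eq_intCast_iff _ _ _).mp this
    calc σ ^ z = σ ^ ((((z : ZMod p)).val : ℤ)) := by
          rw [zpow_eq_zpow_iff_modEq, horder]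
          exact hmod.symm
      _ = σ ^ (((z : ZMod p)).val) := zpow_natCast σ _
  -- the parametrization of α by ZMod p
  set e0 : ZMod p → α := fun k => σ ^ k.val • x₀ with he0
  have he0surj : Function.Surjective e0 := by
    intro y
    obtain ⟨m, hm⟩ := exists_smul_eq N x₀ y
    have hmz : (m : G) ∈ Subgroup.zpowers σ := by rw [hzpN]; exact m.2
    obtain ⟨z, hz⟩ := Subgroup.mem_zpowers_iff.mp hmz
    refine ⟨((z : ZMod p)), ?_⟩
    rw [he0]
    simp only
    rw [← hzval z, hz]
    exact hm
  have he0bij : Function.Bijective e0 :=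
    (Fintype.bijective_iff_surjective_and_card e0).mpr
      ⟨he0surj, by rw [ZMod.card, hcard]⟩
  set E : ZMod p ≃ α := Equiv.ofBijective e0 he0bij with hE
  -- translation property
  have hstep : ∀ k : ZMod p, e0 (k + 1) = σ • e0 k := by
    intro k
    have h1 : (k + 1).val = (k.val + 1) % p := by
      rw [ZMod.val_add]
      congr 1
      rw [ZMod.val_one]
    have hpm := pow_mod_orderOf σ (k.val + 1)
    rw [horder] at hpm
    rw [he0]
    simp only
    rw [h1, hpm, pow_succ', mul_smul]
  have htrans : ∀ (m : ℕ) (k : ZMod p), e0 (k + m) = σ ^ m • e0 k := by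
    intro m
    induction m with
    | zero => intro k; simp
    | succ m ih =>
      intro k
      have : (k + (m + 1 : ℕ)) = (k + m) + 1 := by push_cast; ring
      rw [this, hstep, ih, pow_succ', mul_smul]
  refine ⟨E.symm, ?_⟩
  intro g
  -- conjugation of σ by g is a power of σ
  have hconjN : g * σ * g⁻¹ ∈ N := hNnormal.conj_mem σ g₀.2 g
  obtain ⟨z, hz⟩ := Subgroup.mem_zpowers_iff.mp
    (show g * σ * g⁻¹ ∈ Subgroup.zpowers σ by rw [hzpN]; exact hconjN)
  set j : ZMod p := ((z : ZMod p)) with hj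
  have hconj : g * σ * g⁻¹ = σ ^ j.val := by rw [← hz, hzval z]
  have hjne : j ≠ 0 := by
    intro h
    rw [h, ZMod.val_zero, pow_zero] at hconj
    apply hσne
    calc σ = g⁻¹ * (g * σ * g⁻¹) * g := by group
      _ = g⁻¹ * 1 * g := by rw [hconj]
      _ = 1 := by group
  have hcop : Nat.Coprime j.val p := by
    apply Nat.Coprime.symm
    rw [Nat.Prime.coprime_iff_not_dvd hp]
    intro hdvd
    have hlt : j.val < p := ZMod.val_lt j
    have hpos : 0 < j.val := Nat.pos_of_ne_zero (fun h => hjne ((ZMod.val_eq_zero j).mp h))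
    exact absurd (Nat.le_of_dvd hpos hdvd) (by omega)
  refine ⟨ZMod.unitOfCoprime j.val hcop, E.symm (g • x₀), ?_⟩
  intro x
  have hx : x = e0 (E.symm x) := (E.apply_symm_apply x).symm
  set k : ZMod p := E.symm x with hk
  set b : ZMod p := E.symm (g • x₀) with hb
  have hgx0 : g • x₀ = e0 b := (E.apply_symm_apply (g • x₀)).symm
  have hmain : g • x = e0 (b + (j.val * k.val : ℕ)) := by
    rw [htrans, hx]
    show g • (σ ^ k.val • x₀) = σ ^ (j.val * k.val) • e0 b
    rw [← hgx0]
    have hcp : g * σ ^ k.val * g⁻¹ = σ ^ (j.val * k.val) := by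
      have : g * σ ^ k.val * g⁻¹ = (g * σ * g⁻¹) ^ k.val := by
        rw [conj_pow]
      rw [this, hconj, ← pow_mul]
    calc g • (σ ^ k.val • x₀) = (g * σ ^ k.val) • x₀ := by rw [mul_smul]
      _ = ((g * σ ^ k.val * g⁻¹) * g) • x₀ := by group
      _ = σ ^ (j.val * k.val) • (g • x₀) := by rw [hcp, mul_smul]
  rw [hmain]
  have : E.symm (e0 (b + (j.val * k.val : ℕ))) = b + (j.val * k.val : ℕ) := by
    have : e0 (b + (j.val * k.val : ℕ)) = E (b + (j.val * k.val : ℕ)) := rfl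
    rw [this, E.symm_apply_apply]
  rw [this]
  push_cast
  rw [ZMod.coe_unitOfCoprime, ZMod.natCast_val, ZMod.natCast_val, ZMod.cast_id, ZMod.cast_id]
  ring

/-- An irreducible polynomial of prime degree `p` over a field of characteristic zero is
solvable by radicals iff its Galois group, acting on the `p` roots identified with
`ZMod p`, consists (after conjugation by a bijection of the roots with `ZMod p`) of
affine maps `x ↦ a * x + b`. -/
theorem stmt_2 {F : Type*} [Field F] [CharZero F] (p : ℕ) (hp : p.Prime)
    (f : Polynomial F) (hirr : Irreducible f) (hdeg : f.natDegree = p) :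
    haveI : Fact ((f.map (algebraMap F f.SplittingField)).Splits) :=
      ⟨Polynomial.SplittingField.splits f⟩
    (IsSolvable f.Gal ↔
      ∃ e : f.rootSet f.SplittingField ≃ ZMod p,
        ∀ g : f.Gal, ∃ (a : (ZMod p)ˣ) (b : ZMod p),
          ∀ x : f.rootSet f.SplittingField, e (g • x) = (a : ZMod p) * e x + b) := by
  haveI : Fact ((f.map (algebraMap F f.SplittingField)).Splits) :=
    ⟨Polynomial.SplittingField.splits f⟩
  have hsep : f.Separable := hirr.separable
  have hcard : Fintype.card (f.rootSet f.SplittingField) = p := by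
    rw [Polynomial.card_rootSet_eq_natDegree hsep (Polynomial.SplittingField.splits f), hdeg]
  have hFaith : @FaithfulSMul f.Gal (f.rootSet f.SplittingField)
      (Polynomial.Gal.smul f f.SplittingField) := by
    constructor
    intro g h hgh
    apply Polynomial.Gal.galActionHom_injective f f.SplittingField
    ext x
    exact Subtype.ext_iff.mp (hgh x)
  haveI := hFaith
  have hTrans : MulAction.IsPretransitive f.Gal (f.rootSet f.SplittingField) :=
    Polynomial.Gal.galAction_isPretransitive f f.SplittingField hirr
  constructor
  · intro hs
    exact @affine_of_solvable f.Gal _ (f.rootSet f.SplittingField) _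
      (Polynomial.Gal.galAction f f.SplittingField) hFaith hTrans p hp hcard hs
  · rintro ⟨e, he⟩
    choose A B hAB using he
    have huniq : ∀ (a a' : (ZMod p)ˣ) (b b' : ZMod p),
        (∀ k : ZMod p, (a : ZMod p) * k + b = (a' : ZMod p) * k + b') → a = a' ∧ b = b' := by
      intro a a' b b' h
      have h0 := h 0
      rw [mul_zero, mul_zero, zero_add, zero_add] at h0
      have h1 := h 1
      rw [mul_one, mul_one, h0] at h1
      exact ⟨Units.ext (add_right_cancel h1), h0⟩
    have hmul : ∀ g h : f.Gal, A (g * h) = A g * A h := by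
      intro g h
      have key : ∀ k : ZMod p, (A (g * h) : ZMod p) * k + B (g * h)
          = ((A g * A h : (ZMod p)ˣ) : ZMod p) * k + ((A g : ZMod p) * B h + B g) := by
        intro k
        obtain ⟨x, rfl⟩ := e.surjective k
        rw [← hAB, show (g * h) • x = g • (h • x) from mul_smul (self := (Polynomial.Gal.galAction f f.SplittingField).toSemigroupAction) g h x, hAB, hAB]
        push_cast
        ring
      exact (huniq _ _ _ _ key).1
    set χ : f.Gal →* (ZMod p)ˣ := MonoidHom.mk' A hmul with hχ
    have hker : ∀ g h : f.Gal, g ∈ χ.ker → h ∈ χ.ker → g * h = h * g := by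
      intro g h hg hh
      have hAg : A g = 1 := hg
      have hAh : A h = 1 := hh
      apply FaithfulSMul.eq_of_smul_eq_smul (α := f.rootSet f.SplittingField)
      intro x
      apply e.injective
      rw [show (g * h) • x = g • (h • x) from mul_smul (self := (Polynomial.Gal.galAction f f.SplittingField).toSemigroupAction) g h x,
        show (h * g) • x = h • (g • x) from mul_smul (self := (Polynomial.Gal.galAction f f.SplittingField).toSemigroupAction) h g x, hAB, hAB, hAB, hAB, hAg, hAh]
      push_cast
      ring
    haveI : Group.IsSolvable χ.ker := isSolvable_of_comm
      (fun a b => Subtype.ext (hker a b a.2 b.2))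
    exact solvable_of_ker_le_range χ.ker.subtype χ (by rw [Subgroup.range_subtype])
end

section
/- A transitive solvable subgroup of the symmetric group S_p, for p prime, is conjugate to a subgroup of the affine group AGL(1,p) containing the p-cycle group of translations. -/
open MulAction
open scoped commutatorElement

/-- Galois's theorem on solvable transitive groups of prime degree: a transitive solvable
subgroup of the symmetric group on `ZMod p` (`p` prime) is conjugate to a subgroup of the
affine group `AGL(1,p)` containing all the translations `x ↦ x + b`. -/
theorem stmt_3 (p : ℕ) (hp : p.Prime) (G : Subgroup (Equiv.Perm (ZMod p)))
    (htrans : ∀ x y : ZMod p, ∃ g ∈ G, g x = y) (hsolv : IsSolvable G) :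
    ∃ σ : Equiv.Perm (ZMod p),
      (∀ g ∈ G, ∃ (a : (ZMod p)ˣ) (b : ZMod p),
        ∀ x : ZMod p, (σ * g * σ⁻¹) x = (a : ZMod p) * x + b) ∧
      (∀ b : ZMod p, ∃ g ∈ G, ∀ x : ZMod p, (σ * g * σ⁻¹) x = x + b) := by
  classical
  haveI hfact := Fact.mk hp
  haveI : NeZero p := ⟨hp.ne_zero⟩
  have h01 : (0 : ZMod p) ≠ 1 := zero_ne_one
  -- the G-action on `ZMod p` is pretransitive
  haveI hpt : IsPretransitive G (ZMod p) := by
    constructor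
    intro x y
    obtain ⟨g, hg, hgx⟩ := htrans x y
    exact ⟨⟨g, hg⟩, hgx⟩
  -- take the last nontrivial term of the derived series of G
  obtain ⟨n, hn⟩ := hsolv.solvable
  have hfind : ∃ n, derivedSeries G n = ⊥ := ⟨n, hn⟩
  set n₀ := Nat.find hfind with hn₀def
  have hbot0 : derivedSeries ↥G n₀ = ⊥ := Nat.find_spec hfind
  have hn₀pos : n₀ ≠ 0 := by
    intro h
    rw [h, derivedSeries_zero] at hbot0
    obtain ⟨g0, hg0, hg0x⟩ := htrans 0 1
    have : (⟨g0, hg0⟩ : ↥G) ∈ (⊤ : Subgroup ↥G) := Subgroup.mem_top _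
    rw [hbot0, Subgroup.mem_bot] at this
    have hg01 : g0 = 1 := congrArg Subtype.val this
    rw [hg01] at hg0x
    exact h01 hg0x
  obtain ⟨m, hm⟩ : ∃ m, n₀ = m + 1 := ⟨n₀ - 1, (Nat.succ_pred_eq_of_pos (Nat.pos_of_ne_zero hn₀pos)).symm⟩
  have hbot : derivedSeries ↥G (m + 1) = ⊥ := hm ▸ hbot0
  have hne : derivedSeries ↥G m ≠ ⊥ := Nat.find_min hfind (by omega)
  set N' : Subgroup ↥G := derivedSeries ↥G m with hN'def
  haveI hN'norm : N'.Normal := derivedSeries_normal _ _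
  -- N' is abelian
  have hcomm' : ∀ a ∈ N', ∀ b ∈ N', a * b = b * a := by
    intro a ha b hb
    have h1 : ⁅a, b⁆ ∈ derivedSeries ↥G (m + 1) := by
      rw [derivedSeries_succ]
      exact Subgroup.commutator_mem_commutator ha hb
    rw [hbot, Subgroup.mem_bot] at h1
    exact commutatorElement_eq_one_iff_mul_comm.mp h1
  -- N' does not act trivially
  have hntriv : ∃ g ∈ N', ∃ x : ZMod p, ((g : ↥G) : Equiv.Perm (ZMod p)) x ≠ x := by
    by_contra hcon
    push_neg at hcon
    apply hne
    ext g
    simp only [Subgroup.mem_bot]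
    constructor
    · intro hg
      apply Subtype.ext
      apply Equiv.ext
      intro x
      exact hcon g hg x
    · rintro rfl
      exact N'.one_mem
  obtain ⟨g1, hg1, x1, hx1⟩ := hntriv
  -- the orbit of N' through x1 is everything
  have horb : orbit (↥N') x1 = Set.univ := by
    have hB : IsBlock ↥G (orbit (↥N') x1) := IsBlock.orbit_of_normal x1
    have hBne : (orbit (↥N') x1).Nonempty := ⟨x1, mem_orbit_self x1⟩
    have hdvd : (orbit (↥N') x1).ncard ∣ p := by
      have := hB.ncard_dvd_card hBne
      rwa [Nat.card_eq_fintype_card, ZMod.card] at this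
    rcases hp.eq_one_or_self_of_dvd _ hdvd with h1 | hP
    · exfalso
      obtain ⟨a, ha⟩ := Set.ncard_eq_one.mp h1
      have hx1mem : x1 ∈ orbit (↥N') x1 := mem_orbit_self x1
      have hgx1mem : ((g1 : ↥G) : Equiv.Perm (ZMod p)) x1 ∈ orbit (↥N') x1 :=
        mem_orbit x1 (⟨g1, hg1⟩ : ↥N')
      rw [ha] at hx1mem hgx1mem
      exact hx1 (hgx1mem.trans hx1mem.symm)
    · apply Set.eq_of_subset_of_ncard_le (Set.subset_univ _)
      rw [hP, Set.ncard_univ, Nat.card_eq_fintype_card, ZMod.card]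
  -- push N' down to a subgroup of the permutation group
  set NN : Subgroup (Equiv.Perm (ZMod p)) := N'.map G.subtype with hNNdef
  have hNG : ∀ π ∈ NN, π ∈ G := by
    rintro π hπ
    obtain ⟨n, _, rfl⟩ := hπ
    exact n.2
  have hNcomm : ∀ π ∈ NN, ∀ ρ ∈ NN, π * ρ = ρ * π := by
    rintro π hπ ρ hρ
    obtain ⟨a, ha, rfl⟩ := hπ
    obtain ⟨b, hb, rfl⟩ := hρ
    have := hcomm' a ha b hb
    calc (G.subtype a) * (G.subtype b) = G.subtype (a * b) := (map_mul _ _ _).symm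
    _ = G.subtype (b * a) := by rw [this]
    _ = (G.subtype b) * (G.subtype a) := map_mul _ _ _
  have hNconj : ∀ g ∈ G, ∀ π ∈ NN, g * π * g⁻¹ ∈ NN := by
    rintro g hg π hπ
    obtain ⟨a, ha, rfl⟩ := hπ
    refine ⟨(⟨g, hg⟩ : ↥G) * a * (⟨g, hg⟩ : ↥G)⁻¹, hN'norm.conj_mem a ha _, ?_⟩
    simp
  have hNtrans : ∀ x y : ZMod p, ∃ π ∈ NN, π x = y := by
    intro x y
    have hx : x ∈ orbit (↥N') x1 := horb ▸ Set.mem_univ x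
    have hy : y ∈ orbit (↥N') x1 := horb ▸ Set.mem_univ y
    obtain ⟨nx, hnx⟩ := hx
    obtain ⟨ny, hny⟩ := hy
    refine ⟨G.subtype ((ny : ↥G) * (nx : ↥G)⁻¹), ⟨(ny * nx⁻¹ : ↥N'), (ny * nx⁻¹ : ↥N').2, by simp⟩, ?_⟩
    have hx' : ((nx : ↥G) : Equiv.Perm (ZMod p)) x1 = x := hnx
    have hy' : ((ny : ↥G) : Equiv.Perm (ZMod p)) x1 = y := hny
    have : ((nx : ↥G)⁻¹ : ↥G).val x = x1 := by
      rw [← hx']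
      simp
    simp only [Subgroup.coe_subtype, Subgroup.coe_mul, Equiv.Perm.mul_apply]
    rw [this, hy']
  -- N acts freely
  have hNfree : ∀ π ∈ NN, ∀ x : ZMod p, π x = x → π = 1 := by
    intro π hπ x hx
    apply Equiv.ext
    intro y
    obtain ⟨ρ, hρ, rfl⟩ := hNtrans x y
    have := hNcomm π hπ ρ hρ
    calc π (ρ x) = (π * ρ) x := rfl
    _ = (ρ * π) x := by rw [this]
    _ = ρ (π x) := rfl
    _ = ρ x := by rw [hx]
    _ = (1 : Equiv.Perm (ZMod p)) (ρ x) := rfl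
  -- evaluation at 0 is a bijection from N
  have hbij0 : Function.Bijective (fun π : ↥NN => (π : Equiv.Perm (ZMod p)) 0) := by
    constructor
    · intro π₁ π₂ h
      have hmem : (π₂ : Equiv.Perm (ZMod p))⁻¹ * π₁ ∈ NN := NN.mul_mem (NN.inv_mem π₂.2) π₁.2
      have : ((π₂ : Equiv.Perm (ZMod p))⁻¹ * π₁) 0 = 0 := by
        simp only [Equiv.Perm.mul_apply]
        rw [show (π₁ : Equiv.Perm (ZMod p)) 0 = (π₂ : Equiv.Perm (ZMod p)) 0 from h]
        simp
      have := hNfree _ hmem 0 this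
      have h2 : (π₁ : Equiv.Perm (ZMod p)) = π₂ := by
        have := congrArg (fun ρ => (π₂ : Equiv.Perm (ZMod p)) * ρ) this
        simpa [mul_assoc] using this
      exact Subtype.ext h2
    · intro b
      obtain ⟨π, hπ, hπb⟩ := hNtrans 0 b
      exact ⟨⟨π, hπ⟩, hπb⟩
  have hcard : Nat.card ↥NN = p := by
    rw [Nat.card_congr (Equiv.ofBijective _ hbij0), Nat.card_eq_fintype_card, ZMod.card]
  -- the generator c
  obtain ⟨c, hcN, hc0⟩ := hNtrans 0 1
  have hc1 : c ≠ 1 := by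
    intro h
    rw [h] at hc0
    exact h01 hc0
  have horderc : orderOf c = p := by
    have h1 : orderOf (⟨c, hcN⟩ : ↥NN) ∣ p := by
      have := orderOf_dvd_natCard (⟨c, hcN⟩ : ↥NN)
      rwa [hcard] at this
    rcases hp.eq_one_or_self_of_dvd _ h1 with h | h
    · exfalso
      have := orderOf_eq_one_iff.mp h
      exact hc1 (congrArg Subtype.val this)
    · rw [← Subgroup.orderOf_coe] at h
      exact h
  have hpow : ∀ π ∈ NN, ∃ k : ℕ, π = c ^ k := by
    intro π hπ
    have htop : Subgroup.zpowers (⟨c, hcN⟩ : ↥NN) = ⊤ := by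
      apply Subgroup.eq_top_of_card_eq
      rw [Nat.card_zpowers, hcard, ← Subgroup.orderOf_coe, horderc]
    have : (⟨π, hπ⟩ : ↥NN) ∈ Subgroup.zpowers (⟨c, hcN⟩ : ↥NN) := htop ▸ Subgroup.mem_top _
    rw [← mem_powers_iff_mem_zpowers] at this
    obtain ⟨k, hk⟩ := this
    refine ⟨k, ?_⟩
    have := congrArg Subtype.val hk
    simpa using this.symm
  -- the conjugating permutation
  set f : ZMod p → ZMod p := fun k => (c ^ k.val) 0 with hfdef
  have hfinj : Function.Injective f := by
    have haux : ∀ i j : ZMod p, j.val ≤ i.val → f i = f j → i = j := by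
      intro i j hle hf
      have hsum : c ^ (i.val - j.val + j.val) = c ^ i.val := by
        rw [Nat.sub_add_cancel hle]
      have h2 : (c ^ (i.val - j.val)) ((c ^ j.val) 0) = (c ^ j.val) 0 := by
        calc (c ^ (i.val - j.val)) ((c ^ j.val) 0) = (c ^ (i.val - j.val) * c ^ j.val) 0 := rfl
        _ = (c ^ (i.val - j.val + j.val)) 0 := by rw [pow_add]
        _ = (c ^ i.val) 0 := by rw [hsum]
        _ = (c ^ j.val) 0 := hf
      have h3 : c ^ (i.val - j.val) = 1 := hNfree _ (NN.pow_mem hcN _) _ h2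
      have h4 : p ∣ i.val - j.val := by
        have := orderOf_dvd_of_pow_eq_one h3
        rwa [horderc] at this
      have h5 : i.val - j.val < p := lt_of_le_of_lt (Nat.sub_le _ _) (ZMod.val_lt i)
      have h6 : i.val - j.val = 0 := Nat.eq_zero_of_dvd_of_lt h4 h5
      have h7 : i.val = j.val := le_antisymm (Nat.le_of_sub_eq_zero h6) hle
      exact ZMod.val_injective p h7
    intro i j hf
    rcases le_total j.val i.val with h | h
    · exact haux i j h hf
    · exact (haux j i h hf.symm).symm
  have hfbij : Function.Bijective f := Finite.injective_iff_bijective.mp hfinj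
  set σ : Equiv.Perm (ZMod p) := (Equiv.ofBijective f hfbij).symm with hσdef
  have hσinv : ∀ x : ZMod p, σ⁻¹ x = f x := by
    intro x
    simp [hσdef, Equiv.Perm.inv_def]
  have hK : ∀ k : ℕ, σ ((c ^ k) 0) = (k : ZMod p) := by
    intro k
    have h1 : f (k : ZMod p) = (c ^ k) 0 := by
      simp only [hfdef]
      rw [ZMod.val_natCast]
      have hmod : c ^ (k % p) = c ^ k := by
        have := pow_mod_orderOf c k
        rwa [horderc] at this
      rw [hmod]
    have : σ (f (k : ZMod p)) = (k : ZMod p) := Equiv.symm_apply_apply _ _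
    rwa [h1] at this
  -- conjugates of powers of c are translations
  have hL : ∀ (k : ℕ) (x : ZMod p), (σ * c ^ k * σ⁻¹) x = x + (k : ZMod p) := by
    intro k x
    have h1 : (σ * c ^ k * σ⁻¹) x = σ ((c ^ k) (f x)) := by
      simp only [Equiv.Perm.mul_apply, hσinv]
    rw [h1]
    have h2 : (c ^ k) (f x) = (c ^ (k + x.val)) 0 := by
      simp only [hfdef]
      rw [pow_add]
      rfl
    rw [h2, hK]
    push_cast
    rw [ZMod.natCast_val, ZMod.cast_id]
    ring
  refine ⟨σ, ?_, ?_⟩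
  · -- every element of G becomes affine
    intro g hg
    set k : Equiv.Perm (ZMod p) := g * c * g⁻¹ with hkdef
    have hkN : k ∈ NN := hNconj g hg c hcN
    obtain ⟨a, hka⟩ := hpow k hkN
    have key : ∀ x : ZMod p, (σ * g * σ⁻¹) (x + 1) = (σ * g * σ⁻¹) x + (a : ZMod p) := by
      intro x
      have h1 : (σ * c * σ⁻¹) x = x + 1 := by
        have := hL 1 x
        simpa using this
      have e1 : (σ * g * σ⁻¹) * (σ * c * σ⁻¹) = (σ * c ^ a * σ⁻¹) * (σ * g * σ⁻¹) := by
        rw [← hka, hkdef]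
        group
      calc (σ * g * σ⁻¹) (x + 1) = (σ * g * σ⁻¹) ((σ * c * σ⁻¹) x) := by rw [h1]
      _ = ((σ * g * σ⁻¹) * (σ * c * σ⁻¹)) x := rfl
      _ = ((σ * c ^ a * σ⁻¹) * (σ * g * σ⁻¹)) x := by rw [e1]
      _ = (σ * c ^ a * σ⁻¹) ((σ * g * σ⁻¹) x) := rfl
      _ = (σ * g * σ⁻¹) x + (a : ZMod p) := hL a _
    have ha0 : (a : ZMod p) ≠ 0 := by
      intro h
      have := key 0
      rw [h, add_zero, zero_add] at this
      exact h01 ((σ * g * σ⁻¹).injective this).symm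
    refine ⟨(isUnit_iff_ne_zero.mpr ha0).unit, (σ * g * σ⁻¹) 0, ?_⟩
    have haffine : ∀ j : ℕ, (σ * g * σ⁻¹) (j : ZMod p) =
        (a : ZMod p) * (j : ZMod p) + (σ * g * σ⁻¹) 0 := by
      intro j
      induction j with
      | zero => simp
      | succ j ih =>
        have hcast : ((j + 1 : ℕ) : ZMod p) = (j : ZMod p) + 1 := by push_cast; ring
        rw [hcast, key ((j : ZMod p)), ih]
        push_cast
        ring
    intro x
    rw [IsUnit.unit_spec]
    have := haffine x.val
    rwa [ZMod.natCast_val, ZMod.cast_id] at this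
  · -- every translation is achieved
    intro b
    refine ⟨c ^ b.val, hNG _ (NN.pow_mem hcN _), ?_⟩
    intro x
    rw [hL b.val x, ZMod.natCast_val, ZMod.cast_id]
end

section
/- For p prime and a transitive solvable subgroup G of S_p, every nontrivial element of G fixes at most one point of {0,...,p-1}. -/
open MulAction Subgroup Equiv

/-- For `p` prime and a transitive solvable subgroup `G` of the symmetric group on `p`
points, every nontrivial element of `G` fixes at most one point. -/
theorem stmt_4 (p : ℕ) (hp : p.Prime) (G : Subgroup (Equiv.Perm (Fin p)))
    (htrans : ∀ x y : Fin p, ∃ g ∈ G, g x = y) (hsolv : IsSolvable G) :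
    ∀ g ∈ G, g ≠ 1 → ∀ x y : Fin p, g x = x → g y = y → x = y := by
  classical
  haveI : Fact p.Prime := ⟨hp⟩
  intro g hg hg1 x y hgx hgy
  by_contra hxy
  -- the action of `↥G` on `Fin p` is pretransitive
  haveI hpt : MulAction.IsPretransitive ↥G (Fin p) := by
    constructor
    intro a b
    obtain ⟨g', hg', h⟩ := htrans a b
    exact ⟨⟨g', hg'⟩, h⟩
  -- `↥G` is nontrivial
  have hGnt : ∃ u : ↥G, u ≠ 1 := by
    obtain ⟨u, hu, hux⟩ := htrans x y
    refine ⟨⟨u, hu⟩, fun h => hxy ?_⟩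
    have : u = 1 := congrArg Subtype.val h
    rw [this] at hux
    simpa using hux
  -- minimal `n` with trivial derived series term
  have hex : ∃ n, derivedSeries ↥G n = ⊥ := hsolv.solvable
  set n := Nat.find hex with hn
  have hnbot : derivedSeries ↥G n = ⊥ := Nat.find_spec hex
  have hn0 : n ≠ 0 := by
    intro h0
    obtain ⟨u, hu⟩ := hGnt
    apply hu
    have : u ∈ derivedSeries ↥G n := by rw [h0]; exact Subgroup.mem_top u
    rwa [hnbot, Subgroup.mem_bot] at this
  set m := n - 1 with hmdef
  have hmn : m < n := Nat.sub_lt (Nat.pos_of_ne_zero hn0) one_pos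
  set N := derivedSeries ↥G m with hNdef
  have hNbot : N ≠ ⊥ := Nat.find_min hex hmn
  have hsucc : ⁅N, N⁆ = ⊥ := by
    have : m + 1 = n := by omega
    rw [hNdef, ← derivedSeries_succ, this, hnbot]
  haveI hNnormal : N.Normal := derivedSeries_normal _ _
  -- N is abelian
  have habel : ∀ a b : ↥G, a ∈ N → b ∈ N → a * b = b * a := by
    intro a b ha hb
    have h1 : (open scoped commutatorElement in ⁅a, b⁆ ∈ ⁅N, N⁆) := Subgroup.commutator_mem_commutator ha hb
    rw [hsucc, Subgroup.mem_bot] at h1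
    exact commutatorElement_eq_one_iff_mul_comm.mp h1
  -- a nontrivial element of N
  obtain ⟨σ₀, hσ₀N, hσ₀⟩ : ∃ u : ↥G, u ∈ N ∧ u ≠ 1 := by
    by_contra h
    push_neg at h
    apply hNbot
    rw [eq_bot_iff]
    intro u hu
    rw [Subgroup.mem_bot]
    exact h u hu
  obtain ⟨a, ha⟩ : ∃ a : Fin p, (σ₀ : Equiv.Perm (Fin p)) a ≠ a := by
    by_contra h
    push_neg at h
    exact hσ₀ (Subtype.ext (Equiv.ext h))
  -- the orbit of a under N is everything
  have hblock : IsBlock ↥G (orbit N a) := IsBlock.orbit_of_normal a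
  have hne : (orbit N a).Nonempty := ⟨a, mem_orbit_self a⟩
  have hdvd : (orbit N a).ncard ∣ p := by
    simpa using hblock.ncard_dvd_card hne
  have htwo : 1 < (orbit N a).ncard := by
    rw [Set.one_lt_ncard_iff (Set.toFinite _)]
    exact ⟨(σ₀ : Equiv.Perm (Fin p)) a, a, ⟨⟨σ₀, hσ₀N⟩, rfl⟩, mem_orbit_self a, ha⟩
  have horb : (orbit N a).ncard = p :=
    (hp.eq_one_or_self_of_dvd _ hdvd).resolve_left (by omega)
  have huniv : orbit N a = Set.univ := by
    apply Set.eq_of_subset_of_ncard_le (Set.subset_univ _)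
    simp [Set.ncard_univ, horb]
  -- any element of N with a fixed point is trivial
  have hfix : ∀ u : ↥G, u ∈ N → ∀ z : Fin p, (u : Equiv.Perm (Fin p)) z = z → u = 1 := by
    intro u hu z hz
    have hz' : z ∈ orbit N a := by rw [huniv]; exact Set.mem_univ z
    obtain ⟨τ, hτ⟩ := hz'
    have hτN : (τ : ↥G) ∈ N := τ.2
    have hτa : ((τ : ↥G) : Equiv.Perm (Fin p)) a = z := hτ
    have key : ∀ v : ↥G, v ∈ N →
        (u : Equiv.Perm (Fin p)) ((v : Equiv.Perm (Fin p)) a)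
          = (v : Equiv.Perm (Fin p)) ((u : Equiv.Perm (Fin p)) a) := by
      intro v hv
      have hc := congrArg (fun w : ↥G => ((w : Equiv.Perm (Fin p)) a)) (habel u v hu hv)
      simpa [Equiv.Perm.mul_apply] using hc
    have hua : (u : Equiv.Perm (Fin p)) a = a := by
      have h1 := key (τ : ↥G) hτN
      rw [hτa, hz] at h1
      exact (Equiv.injective _) (h1.symm.trans hτa.symm)
    refine Subtype.ext (Equiv.ext fun w => ?_)
    have hw : w ∈ orbit N a := by rw [huniv]; exact Set.mem_univ w
    obtain ⟨τ', hτ'⟩ := hw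
    have hτ'N : (τ' : ↥G) ∈ N := τ'.2
    have hτ'a : ((τ' : ↥G) : Equiv.Perm (Fin p)) a = w := hτ'
    have h2 := key (τ' : ↥G) hτ'N
    rw [hua, hτ'a] at h2
    simpa using h2
  -- the stabilizer of a in N is trivial
  have hstab : stabilizer ↥N a = ⊥ := by
    rw [eq_bot_iff]
    intro τ hτ
    rw [Subgroup.mem_bot]
    have : (τ : ↥G) = 1 := hfix (τ : ↥G) τ.2 a hτ
    exact Subtype.ext this
  -- N has cardinality p
  have hcardN : Nat.card ↥N = p := by
    have hequiv := Nat.card_congr (MulAction.orbitProdStabilizerEquivGroup ↥N a)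
    rw [Nat.card_prod] at hequiv
    rw [← hequiv, hstab]
    have h1 : Nat.card (orbit ↥N a) = p := by
      rw [Nat.card_coe_set_eq, horb]
    rw [h1]
    simp
  -- N is cyclic, generated by σ
  obtain ⟨σ, hσgen⟩ := (isCyclic_of_prime_card (α := ↥N) hcardN).exists_generator
  set s : Equiv.Perm (Fin p) := ((σ : ↥G) : Equiv.Perm (Fin p)) with hs
  have hσne : σ ≠ 1 := by
    haveI : Nontrivial ↥N := by
      apply Finite.one_lt_card_iff_nontrivial.mp
      rw [hcardN]
      exact hp.one_lt
    obtain ⟨τ, hτ1⟩ := exists_ne (1 : ↥N)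
    intro h
    apply hτ1
    have := hσgen τ
    rw [h] at this
    simpa [Subgroup.zpowers_one_eq_bot] using this
  -- s has order p
  have horder : orderOf s = p := by
    have h1 : orderOf σ = p := by
      apply orderOf_eq_prime
      · have hpc := pow_card_eq_one' (G := ↥N) (x := σ)
        rwa [hcardN] at hpc
      · exact hσne
    have h2 : orderOf ((G.subtype.comp N.subtype) σ) = orderOf σ :=
      orderOf_injective (G.subtype.comp N.subtype)
        ((Subgroup.subtype_injective _).comp (Subgroup.subtype_injective _)) σ
    exact h2.trans h1
  -- powers of s reach everything from a
  have htra : ∀ z : Fin p, ∃ k : ℤ, (s ^ k) a = z := by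
    intro z
    have hz : z ∈ orbit N a := by rw [huniv]; exact Set.mem_univ z
    obtain ⟨τ, hτ⟩ := hz
    obtain ⟨k, hk⟩ := Subgroup.mem_zpowers_iff.mp (hσgen τ)
    refine ⟨k, ?_⟩
    have : ((((σ ^ k : ↥N) : ↥G)) : Equiv.Perm (Fin p)) a = z := by rw [hk]; exact hτ
    rwa [show (((σ ^ k : ↥N) : ↥G) : Equiv.Perm (Fin p)) = s ^ k by push_cast; rfl] at this
  -- powers of s reach everything from x
  have htrx : ∀ z : Fin p, ∃ k : ℤ, (s ^ k) x = z := by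
    intro z
    obtain ⟨i, hi⟩ := htra x
    obtain ⟨j, hj⟩ := htra z
    refine ⟨j - i, ?_⟩
    have hxa : (s ^ i)⁻¹ x = a := by rw [← hi]; simp
    rw [zpow_sub, Equiv.Perm.mul_apply, hxa, hj]
  -- fixed points of powers of s give divisibility
  have hfixpow : ∀ k : ℤ, ∀ z : Fin p, (s ^ k) z = z → (p : ℤ) ∣ k := by
    intro k z hk
    have hmem : ((σ : ↥G)) ^ k ∈ N := Subgroup.zpow_mem N σ.2 k
    have h1 : ((σ : ↥G)) ^ k = 1 := by
      apply hfix _ hmem z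
      rwa [show ((((σ : ↥G)) ^ k : ↥G) : Equiv.Perm (Fin p)) = s ^ k by push_cast; rfl]
    have h2 : s ^ k = 1 := by
      have := congrArg (Subtype.val) h1
      push_cast at this
      exact this
    rwa [← orderOf_dvd_iff_zpow_eq_one, horder] at h2
  -- conjugation sends s to a power of s
  obtain ⟨k, hconj⟩ : ∃ k : ℤ, g * s * g⁻¹ = s ^ k := by
    set gG : ↥G := ⟨g, hg⟩ with hgG
    have hmem : gG * (σ : ↥G) * gG⁻¹ ∈ N := hNnormal.conj_mem _ σ.2 gG
    obtain ⟨k, hk⟩ := Subgroup.mem_zpowers_iff.mp (hσgen ⟨_, hmem⟩)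
    refine ⟨k, ?_⟩
    have h1 : (((σ ^ k : ↥N) : ↥G)) = gG * (σ : ↥G) * gG⁻¹ := congrArg Subtype.val hk
    have h2 := congrArg (Subtype.val : ↥G → Equiv.Perm (Fin p)) h1
    push_cast at h2
    exact h2.symm
  -- y is a power of s applied to x
  obtain ⟨e, he⟩ := htrx y
  have hse : s ^ e ≠ 1 := by
    intro h
    rw [h] at he
    simp at he
    exact hxy he
  have hpe : ¬ (p : ℤ) ∣ e := by
    intro hd
    apply hse
    rw [← orderOf_dvd_iff_zpow_eq_one, horder]
    exact hd
  -- compute: s^(k*e) x = y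
  have hke : (s ^ (e * k)) x = y := by
    have hgx' : g⁻¹ x = x := by
      nth_rewrite 1 [← hgx]
      exact Equiv.symm_apply_apply g x
    have h1 : (g * s ^ e * g⁻¹) x = y := by
      rw [Equiv.Perm.mul_apply, Equiv.Perm.mul_apply, hgx', he, hgy]
    have h2 : g * s ^ e * g⁻¹ = s ^ (e * k) := by
      have : g * s ^ e * g⁻¹ = (g * s * g⁻¹) ^ e := by
        simpa [MulAut.conj_apply] using (map_zpow (MulAut.conj g) s e)
      rw [this, hconj, ← zpow_mul, mul_comm k e]
    rwa [h2] at h1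
  -- hence p divides e*(k-1)
  have h1 : (s ^ (e * (k - 1))) x = x := by
    have h2 : s ^ (e * (k - 1)) = s ^ (-e) * s ^ (e * k) := by
      rw [← zpow_add]; congr 1; ring
    rw [h2, Equiv.Perm.mul_apply, hke, ← he, zpow_neg, Equiv.Perm.inv_def, Equiv.symm_apply_apply]
  have hdife : (p : ℤ) ∣ e * (k - 1) := hfixpow _ x h1
  have hk1 : (p : ℤ) ∣ (k - 1) :=
    (((Nat.prime_iff_prime_int.mp hp).dvd_mul.mp hdife).resolve_left hpe)
  have hsk : s ^ k = s := by
    have h3 : s ^ (k - 1) = 1 := by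
      rw [← orderOf_dvd_iff_zpow_eq_one, horder]; exact hk1
    calc s ^ k = s ^ (k - 1) * s ^ (1 : ℤ) := by rw [← zpow_add]; congr 1; ring
    _ = s := by rw [h3, one_mul, zpow_one]
  have hcomm : Commute g s := by
    have h4 : g * s * g⁻¹ = s := by rw [hconj, hsk]
    show g * s = s * g
    exact mul_inv_eq_iff_eq_mul.mp h4
  apply hg1
  apply Equiv.ext
  intro z
  show g z = z
  obtain ⟨t, ht⟩ := htrx z
  have hct : g * s ^ t = s ^ t * g := (hcomm.zpow_right t)
  calc g z = (g * s ^ t) x := by rw [Equiv.Perm.mul_apply, ht]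
  _ = (s ^ t) (g x) := by rw [hct, Equiv.Perm.mul_apply]
  _ = z := by rw [hgx, ht]
end

section
/- A regular n-gon is constructible with ruler and compass if and only if n is a product of a power of 2 and distinct Fermat primes; in particular the regular 17-gon is constructible. -/
open Finset IntermediateField Module Polynomial


/-- A complex number is constructible (by ruler and compass) if it can be obtained from
the rationals by field operations and extraction of square roots. -/
inductive IsConstructible : ℂ → Prop
  | base (q : ℚ) : IsConstructible (q : ℂ)
  | add {z w : ℂ} : IsConstructible z → IsConstructible w → IsConstructible (z + w)
  | neg {z : ℂ} : IsConstructible z → IsConstructible (-z)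
  | mul {z w : ℂ} : IsConstructible z → IsConstructible w → IsConstructible (z * w)
  | inv {z : ℂ} : IsConstructible z → IsConstructible z⁻¹
  | sqrt {z : ℂ} : IsConstructible (z * z) → IsConstructible z



open Finset IntermediateField Module Polynomial


/-- Quadratic towers of intermediate fields of `ℂ/ℚ`. -/
inductive QT : IntermediateField ℚ ℂ → Prop
  | bot : QT ⊥
  | step {K : IntermediateField ℚ ℂ} (a : ℂ) : QT K → a * a ∈ K →
      QT (K ⊔ IntermediateField.adjoin ℚ {a})

lemma isIntegral_of_sq {K : IntermediateField ℚ ℂ} {a : ℂ} (ha : a * a ∈ K) :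
    IsIntegral K a := by
  refine ⟨X ^ 2 - C ⟨a * a, ha⟩, monic_X_pow_sub_C _ two_ne_zero, ?_⟩
  have : (algebraMap K ℂ) ⟨a * a, ha⟩ = a * a := rfl
  simp [sq, this]

lemma minpoly_natDegree_le_two {K : IntermediateField ℚ ℂ} {a : ℂ} (ha : a * a ∈ K) :
    (minpoly K a).natDegree ≤ 2 := by
  have h := minpoly.min (A := K) (x := a) (p := X ^ 2 - C ⟨a * a, ha⟩)
    (monic_X_pow_sub_C _ two_ne_zero) (by
      have : (algebraMap K ℂ) ⟨a * a, ha⟩ = a * a := rfl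
      simp [sq, this])
  have h2 : (X ^ 2 - C (⟨a * a, ha⟩ : K)).natDegree = 2 := by
    simpa using natDegree_X_pow_sub_C (n := 2) (a := (⟨a * a, ha⟩ : K))
  calc (minpoly K a).natDegree ≤ (X ^ 2 - C (⟨a * a, ha⟩ : K)).natDegree :=
        natDegree_le_natDegree h
    _ = 2 := h2

lemma QT.out {K : IntermediateField ℚ ℂ} (h : QT K) :
    FiniteDimensional ℚ K ∧ ∃ j : ℕ, finrank ℚ K = 2 ^ j := by
  induction h with
  | bot => exact ⟨inferInstance, 0, by simpa using IntermediateField.finrank_bot (F := ℚ) (E := ℂ)⟩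
  | @step K a hK ha ih =>
    obtain ⟨fd, j, hj⟩ := ih
    have hint : IsIntegral K a := isIntegral_of_sq ha
    haveI : FiniteDimensional K (IntermediateField.adjoin K {a}) :=
      IntermediateField.adjoin.finiteDimensional hint
    haveI : FiniteDimensional ℚ ↥(K ⊔ IntermediateField.adjoin ℚ {a}) := by
      rw [← IntermediateField.restrictScalars_adjoin_eq_sup]
      exact FiniteDimensional.trans ℚ ↥K ↥(IntermediateField.adjoin K {a})
    refine ⟨this, ?_⟩
    have hmul : finrank ℚ ↥(K ⊔ IntermediateField.adjoin ℚ {a}) =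
        finrank ℚ K * finrank K ↥(IntermediateField.adjoin K {a}) := by
      haveI : Module.Free K ↥(IntermediateField.adjoin K {a}) :=
        Module.Free.of_divisionRing _ _
      rw [← IntermediateField.restrictScalars_adjoin_eq_sup]
      exact (Module.finrank_mul_finrank ℚ ↥K ↥(IntermediateField.adjoin K {a})).symm
    have hle : finrank K ↥(IntermediateField.adjoin K {a}) ≤ 2 := by
      rw [IntermediateField.adjoin.finrank hint]; exact minpoly_natDegree_le_two ha
    have hpos : 0 < finrank K ↥(IntermediateField.adjoin K {a}) := finrank_pos
    interval_cases h : finrank K ↥(IntermediateField.adjoin K {a})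
    · exact ⟨j, by rw [hmul, hj, mul_one]⟩
    · exact ⟨j + 1, by rw [hmul, hj, pow_succ]⟩

lemma QT.sup {K₁ K₂ : IntermediateField ℚ ℂ} (h₁ : QT K₁) (h₂ : QT K₂) : QT (K₁ ⊔ K₂) := by
  induction h₂ with
  | bot => simpa using h₁
  | @step K a hK ha ih =>
    rw [← sup_assoc]
    exact QT.step a ih (SetLike.le_def.mp le_sup_right ha)

lemma IsConstructible.mem_QT {z : ℂ} (h : IsConstructible z) :
    ∃ K : IntermediateField ℚ ℂ, QT K ∧ z ∈ K := by
  induction h with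
  | base q => exact ⟨⊥, QT.bot, by simpa using IntermediateField.mem_bot.mpr ⟨q, by norm_cast⟩⟩
  | add hz hw ihz ihw =>
    obtain ⟨K₁, hK₁, hz₁⟩ := ihz; obtain ⟨K₂, hK₂, hw₂⟩ := ihw
    exact ⟨K₁ ⊔ K₂, hK₁.sup hK₂,
      add_mem (SetLike.le_def.mp le_sup_left hz₁) (SetLike.le_def.mp le_sup_right hw₂)⟩
  | neg hz ihz => obtain ⟨K, hK, hz'⟩ := ihz; exact ⟨K, hK, neg_mem hz'⟩
  | mul hz hw ihz ihw =>
    obtain ⟨K₁, hK₁, hz₁⟩ := ihz; obtain ⟨K₂, hK₂, hw₂⟩ := ihw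
    exact ⟨K₁ ⊔ K₂, hK₁.sup hK₂,
      mul_mem (SetLike.le_def.mp le_sup_left hz₁) (SetLike.le_def.mp le_sup_right hw₂)⟩
  | inv hz ihz => obtain ⟨K, hK, hz'⟩ := ihz; exact ⟨K, hK, inv_mem hz'⟩
  | @sqrt z hz ihz =>
    obtain ⟨K, hK, hz'⟩ := ihz
    exact ⟨K ⊔ IntermediateField.adjoin ℚ {z}, QT.step z hK hz',
      SetLike.le_def.mp le_sup_right (IntermediateField.mem_adjoin_simple_self ℚ z)⟩

theorem IsConstructible.minpoly_natDegree {z : ℂ} (h : IsConstructible z) :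
    IsIntegral ℚ z ∧ ∃ j : ℕ, (minpoly ℚ z).natDegree = 2 ^ j := by
  obtain ⟨K, hK, hz⟩ := h.mem_QT
  obtain ⟨fd, j, hj⟩ := hK.out
  set w : K := ⟨z, hz⟩ with hw
  have hwint : IsIntegral ℚ w := IsIntegral.of_finite ℚ w
  have hzw : z = algebraMap K ℂ w := rfl
  have hzint : IsIntegral ℚ z := by rw [hzw]; exact hwint.algebraMap
  refine ⟨hzint, ?_⟩
  have heq : minpoly ℚ z = minpoly ℚ w := by
    rw [hzw]; exact minpoly.algebraMap_eq (algebraMap K ℂ).injective w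
  have hdvd : (minpoly ℚ w).natDegree ∣ finrank ℚ K := minpoly.degree_dvd hwint
  rw [heq]
  rw [hj] at hdvd
  obtain ⟨i, _, hi⟩ := (Nat.dvd_prime_pow Nat.prime_two).mp hdvd
  exact ⟨i, hi⟩



lemma totient_prod_fermat (s : Finset ℕ)
    (hs : ∀ q ∈ s, Nat.Prime q ∧ ∃ m : ℕ, q = 2 ^ 2 ^ m + 1) :
    Odd (∏ q ∈ s, q) ∧ ∃ j : ℕ, Nat.totient (∏ q ∈ s, q) = 2 ^ j := by
  classical
  induction s using Finset.induction_on with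
  | empty => exact ⟨odd_one, 0, by simp⟩
  | @insert q s hq ih =>
    obtain ⟨hodd, j, hj⟩ := ih (fun r hr => hs r (mem_insert_of_mem hr))
    obtain ⟨hqp, m, hm⟩ := hs q (mem_insert_self q s)
    have hqodd : Odd q := by
      rw [hm]; exact (Nat.even_pow.mpr ⟨even_two, (pow_pos two_pos m).ne'⟩).add_one
    have hcop : Nat.Coprime q (∏ r ∈ s, r) := by
      refine (Nat.Prime.coprime_iff_not_dvd hqp).mpr fun hdvd => ?_
      obtain ⟨r, hr, hqr⟩ := hqp.prime.exists_mem_finset_dvd hdvd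
      have hrp := (hs r (mem_insert_of_mem hr)).1
      exact hq (((Nat.prime_dvd_prime_iff_eq hqp hrp).mp hqr) ▸ hr)
    rw [prod_insert hq]
    refine ⟨hqodd.mul hodd, ?_⟩
    rw [Nat.totient_mul hcop, hj, Nat.totient_prime hqp, hm]
    exact ⟨2 ^ m + j, by rw [Nat.add_sub_cancel, ← pow_add]⟩

/-- If `n = 2^k * ∏ s` with `s` distinct Fermat primes, then `φ n` is a power of two. -/
lemma totient_eq_two_pow_of_fermat {n k : ℕ} {s : Finset ℕ}
    (hs : ∀ q ∈ s, Nat.Prime q ∧ ∃ m : ℕ, q = 2 ^ 2 ^ m + 1)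
    (hn : n = 2 ^ k * ∏ q ∈ s, q) : ∃ j : ℕ, Nat.totient n = 2 ^ j := by
  obtain ⟨hodd, j, hj⟩ := totient_prod_fermat s hs
  have hcop : Nat.Coprime (2 ^ k) (∏ q ∈ s, q) :=
    Nat.Coprime.pow_left _ (Nat.coprime_two_left.mpr hodd)
  rw [hn, Nat.totient_mul hcop, hj]
  rcases Nat.eq_zero_or_pos k with rfl | hk
  · exact ⟨j, by simp⟩
  · rw [Nat.totient_prime_pow Nat.prime_two hk]
    exact ⟨k - 1 + j, by ring⟩

/-- Conversely, if `φ n` is a power of two then `n` is `2^k` times distinct Fermat primes. -/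
lemma fermat_of_totient_two_pow {n : ℕ} (hn : 0 < n) {j : ℕ} (hφ : Nat.totient n = 2 ^ j) :
    ∃ (k : ℕ) (s : Finset ℕ),
      (∀ q ∈ s, Nat.Prime q ∧ ∃ m : ℕ, q = 2 ^ 2 ^ m + 1) ∧ n = 2 ^ k * ∏ q ∈ s, q := by
  classical
  refine ⟨n.factorization 2, n.primeFactors.erase 2, ?_, ?_⟩
  · intro q hq
    have hqmem := Finset.mem_of_mem_erase hq
    have hq2 : q ≠ 2 := Finset.ne_of_mem_erase hq
    have hqp : Nat.Prime q := Nat.prime_of_mem_primeFactors hqmem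
    have hqn : q ∣ n := Nat.dvd_of_mem_primeFactors hqmem
    refine ⟨hqp, ?_⟩
    have hdvd : q - 1 ∣ 2 ^ j := by
      rw [← hφ, ← Nat.totient_prime hqp]
      exact Nat.totient_dvd_of_dvd hqn
    obtain ⟨i, _, hi⟩ := (Nat.dvd_prime_pow Nat.prime_two).mp hdvd
    have hq1 : q = 2 ^ i + 1 := by
      have := hqp.one_lt; omega
    have hi0 : i ≠ 0 := by
      rintro rfl
      norm_num at hq1
      exact hq2 hq1
    obtain ⟨m, hm⟩ := Nat.pow_of_pow_add_prime one_lt_two hi0 (hq1 ▸ hqp)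
    exact ⟨m, by rw [hq1, hm]⟩
  · -- every odd prime exponent is 1
    have hexp : ∀ p ∈ n.primeFactors.erase 2, n.factorization p = 1 := by
      intro p hp
      have hp2 : p ≠ 2 := Finset.ne_of_mem_erase hp
      have hpp : Nat.Prime p := Nat.prime_of_mem_primeFactors (Finset.mem_of_mem_erase hp)
      have hp1 : 1 ≤ n.factorization p :=
        (Nat.Prime.factorization_pos_of_dvd hpp hn.ne'
          (Nat.dvd_of_mem_primeFactors (Finset.mem_of_mem_erase hp)))
      by_contra hne
      have h2 : 2 ≤ n.factorization p := by omega
      have hsq : p ^ 2 ∣ n := by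
        calc p ^ 2 ∣ p ^ n.factorization p := pow_dvd_pow p h2
          _ ∣ n := Nat.ordProj_dvd n p
      have : Nat.totient (p ^ 2) ∣ 2 ^ j := hφ ▸ Nat.totient_dvd_of_dvd hsq
      rw [Nat.totient_prime_pow hpp (by norm_num)] at this
      have hpdvd : p ∣ 2 ^ j := dvd_trans ⟨p - 1, by ring⟩ this
      exact hp2 ((Nat.prime_dvd_prime_iff_eq hpp Nat.prime_two).mp
        (Nat.Prime.dvd_of_dvd_pow hpp hpdvd))
    -- now reconstruct n from its factorization
    have hfact := Nat.factorization_prod_pow_eq_self hn.ne'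
    rw [Finsupp.prod, Nat.support_factorization] at hfact
    conv_lhs => rw [← hfact]
    by_cases h2 : 2 ∈ n.primeFactors
    · rw [← Finset.mul_prod_erase _ _ h2]
      congr 1
      refine Finset.prod_congr rfl fun p hp => ?_
      rw [hexp p hp, pow_one]
    · have h20 : n.factorization 2 = 0 := by
        rw [← Nat.support_factorization] at h2
        exact Finsupp.notMem_support_iff.mp h2
      rw [h20, pow_zero, one_mul, Finset.erase_eq_of_notMem h2]
      refine Finset.prod_congr rfl fun p hp => ?_
      have hp' : p ∈ n.primeFactors.erase 2 := by
        rw [Finset.erase_eq_of_notMem h2]; exact hp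
      rw [hexp p hp', pow_one]

open Finset IntermediateField Module Polynomial


lemma index_two_facts {G : Type*} [Group G] {H H' : Subgroup G} (hle : H ≤ H')
    (hcard : Nat.card H' = 2 * Nat.card H) (hfin : 0 < Nat.card H) {σ : G} (hσ' : σ ∈ H')
    (hσ : σ ∉ H) :
    σ * σ ∈ H ∧ ∀ τ : G, τ ∈ H' → τ ∉ H → σ⁻¹ * τ ∈ H := by
  set K := H.subgroupOf H' with hK
  have hKcard : Nat.card K = Nat.card H :=
    Nat.card_congr (Subgroup.subgroupOfEquivOfLe hle).toEquiv
  have hidx : K.index = 2 := by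
    have h1 := Subgroup.card_mul_index K
    rw [hKcard, hcard] at h1
    exact Nat.eq_of_mul_eq_mul_left hfin (by omega)
  set mσ : H' := ⟨σ, hσ'⟩ with hmσ
  have hmσK : mσ ∉ K := by rwa [hK, Subgroup.mem_subgroupOf]
  constructor
  · have := Subgroup.mul_self_mem_of_index_two hidx mσ
    rwa [hK, Subgroup.mem_subgroupOf] at this
  · intro τ hτ' hτ
    set mτ : H' := ⟨τ, hτ'⟩ with hmτ
    have hmτK : mτ ∉ K := by rwa [hK, Subgroup.mem_subgroupOf]
    have : mσ⁻¹ * mτ ∈ K := by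
      rw [Subgroup.mul_mem_iff_of_index_two hidx]
      simp only [inv_mem_iff]
      tauto
    rwa [hK, Subgroup.mem_subgroupOf] at this

lemma IsConstructible.of_quadratic {b c x : ℂ} (hb : IsConstructible b) (hc : IsConstructible c)
    (hx : x * x + b * x + c = 0) : IsConstructible x := by
  have hy : (2 * x + b) * (2 * x + b) = b * b - 4 * c := by linear_combination (4 : ℂ) * hx
  have h4 : IsConstructible (b * b - 4 * c) := by
    have h4' : IsConstructible ((4 : ℚ) : ℂ) := .base 4
    have := (hb.mul hb).add ((h4'.mul hc).neg)
    have he : b * b - 4 * c = b * b + -(((4 : ℚ) : ℂ) * c) := by push_cast; ring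
    rwa [he]
  have hy2 : IsConstructible (2 * x + b) := .sqrt (hy ▸ h4)
  have he2 : x = (2 * x + b + -b) * (((2 : ℚ) : ℂ))⁻¹ := by push_cast; ring
  rw [he2]
  exact (hy2.add hb.neg).mul (.inv (.base 2))

lemma IsConstructible.pow {z : ℂ} (h : IsConstructible z) (i : ℕ) : IsConstructible (z ^ i) := by
  induction i with
  | zero => simpa using IsConstructible.base 1
  | succ i ih => rw [pow_succ]; exact ih.mul h

theorem constructible_of_totient_two_pow {n : ℕ} (hn : 0 < n) {j : ℕ}
    (hφ : Nat.totient n = 2 ^ j) :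
    IsConstructible (Complex.exp (2 * Real.pi * Complex.I / n)) := by
  haveI : NeZero n := ⟨hn.ne'⟩
  set np : ℕ+ := ⟨n, hn⟩ with hnp
  set L := CyclotomicField np ℚ with hL
  haveI : NeZero (np : ℕ) := ⟨np.ne_zero⟩
  haveI : IsCyclotomicExtension {(np : ℕ)} ℚ L := by
    show IsCyclotomicExtension {(np : ℕ)} ℚ (CyclotomicField (np : ℕ) ℚ)
    haveI : NeZero ((np : ℕ) : ℚ) := ⟨by exact_mod_cast np.ne_zero⟩
    exact CyclotomicField.isCyclotomicExtension (n := (np : ℕ)) (K := ℚ)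
  haveI : FiniteDimensional ℚ L := IsCyclotomicExtension.finiteDimensional {(np : ℕ)} ℚ L
  haveI : IsGalois ℚ L := IsCyclotomicExtension.isGalois {(np : ℕ)} ℚ L
  haveI : Algebra.IsAlgebraic ℚ L := Algebra.IsAlgebraic.of_finite ℚ L
  have hfinrank : finrank ℚ L = 2 ^ j := by
    rw [IsCyclotomicExtension.finrank (n := np) L (Polynomial.cyclotomic.irreducible_rat hn)]
    exact hφ
  have hcardG : Nat.card (L ≃ₐ[ℚ] L) = 2 ^ j := by
    rw [IsGalois.card_aut_eq_finrank, hfinrank]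
  have hcomm : ∀ σ τ : L ≃ₐ[ℚ] L, σ * τ = τ * σ := fun σ τ =>
    (IsCyclotomicExtension.zeta_spec np ℚ L).autToPow_injective ℚ
      (by rw [map_mul, map_mul, mul_comm])
  set f : L →ₐ[ℚ] ℂ := IsAlgClosed.lift with hf
  haveI : Finite (L ≃ₐ[ℚ] L) := Finite.of_fintype _
  -- main induction
  have main : ∀ t : ℕ, t ≤ j → ∀ H : Subgroup (L ≃ₐ[ℚ] L), Nat.card H = 2 ^ (j - t) →
      ∀ x : L, x ∈ IntermediateField.fixedField H → IsConstructible (f x) := by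
    intro t
    induction t with
    | zero =>
      intro _ H hH x hx
      have hHtop : H = ⊤ := by
        rw [← Subgroup.card_eq_iff_eq_top, hH, hcardG, Nat.sub_zero]
      subst hHtop
      have htop : IntermediateField.fixedField (⊤ : Subgroup (L ≃ₐ[ℚ] L)) = ⊥ := by
        have hfix : IntermediateField.fixingSubgroup (⊥ : IntermediateField ℚ L) = ⊤ := by
          rw [eq_top_iff]
          intro σ _
          rw [IntermediateField.mem_fixingSubgroup_iff]
          intro x hx
          obtain ⟨q, rfl⟩ := IntermediateField.mem_bot.mp hx
          exact σ.commutes q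
        rw [← hfix, IsGalois.fixedField_fixingSubgroup]
      rw [htop] at hx
      obtain ⟨q, rfl⟩ := IntermediateField.mem_bot.mp hx
      have : f (algebraMap ℚ L q) = ((q : ℚ) : ℂ) := by
        rw [f.commutes q]
        exact eq_ratCast (algebraMap ℚ ℂ) q
      rw [this]
      exact IsConstructible.base q
    | succ t ih =>
      intro ht H hH x hx
      haveI : Fact (Nat.Prime 2) := ⟨Nat.prime_two⟩
      have hdvd : 2 ^ ((j - (t + 1)) + 1) ∣ Nat.card (L ≃ₐ[ℚ] L) := by
        rw [hcardG]
        exact pow_dvd_pow 2 (by omega)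
      obtain ⟨H', hH'card, hle⟩ := Sylow.exists_subgroup_card_pow_succ hdvd hH
      have hexp : j - (t + 1) + 1 = j - t := by omega
      rw [hexp] at hH'card
      have IH := ih (by omega) H' hH'card
      -- find σ ∈ H' \ H
      have hne : ¬ H' ≤ H := by
        intro hcontra
        have : H = H' := le_antisymm hle hcontra
        rw [this, hH'card] at hH
        have := Nat.pow_right_injective (le_refl 2) hH
        omega
      obtain ⟨σ, hσ', hσ⟩ := SetLike.not_le_iff_exists.mp hne
      have hcard2 : Nat.card H' = 2 * Nat.card H := by
        rw [hH, hH'card, ← hexp, pow_succ]; ring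
      obtain ⟨hσ2, hcoset⟩ := index_two_facts hle hcard2 (by rw [hH]; positivity) hσ' hσ
      -- x is fixed by H
      have hfixH : ∀ ρ : L ≃ₐ[ℚ] L, ρ ∈ H → ρ x = x := fun ρ hρ => hx ⟨ρ, hρ⟩
      have hperm : ∀ τ : L ≃ₐ[ℚ] L, τ ∈ H' →
          (τ x = x ∧ τ (σ x) = σ x) ∨ (τ x = σ x ∧ τ (σ x) = x) := by
        intro τ hτ'
        by_cases hτ : τ ∈ H
        · left
          refine ⟨hfixH τ hτ, ?_⟩
          rw [← AlgEquiv.mul_apply, hcomm τ σ, AlgEquiv.mul_apply, hfixH τ hτ]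
        · right
          have hρ : σ⁻¹ * τ ∈ H := hcoset τ hτ' hτ
          constructor
          · have h1 : σ * (σ⁻¹ * τ) = τ := by group
            rw [← h1, AlgEquiv.mul_apply, hfixH _ hρ]
          · have h2 : τ * σ = σ * σ * (σ⁻¹ * τ) := by rw [hcomm τ σ]; group
            rw [← AlgEquiv.mul_apply, h2, AlgEquiv.mul_apply, hfixH _ hρ, hfixH _ hσ2]
      have hb : x + σ x ∈ IntermediateField.fixedField H' := by
        rintro ⟨τ, hτ'⟩
        show τ (x + σ x) = x + σ x
        rw [map_add]
        rcases hperm τ hτ' with ⟨h1, h2⟩ | ⟨h1, h2⟩ <;> rw [h1, h2]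
        exact add_comm _ _
      have hc : x * σ x ∈ IntermediateField.fixedField H' := by
        rintro ⟨τ, hτ'⟩
        show τ (x * σ x) = x * σ x
        rw [map_mul]
        rcases hperm τ hτ' with ⟨h1, h2⟩ | ⟨h1, h2⟩ <;> rw [h1, h2]
        exact mul_comm _ _
      have heq : f x * f x + f (-(x + σ x)) * f x + f (x * σ x) = 0 := by
        have hLeq : x * x + (-(x + σ x)) * x + x * σ x = 0 := by ring
        have := congrArg f hLeq
        simpa [map_add, map_mul, map_neg] using this
      exact IsConstructible.of_quadratic (IH _ (neg_mem hb)) (IH _ hc) heq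
  -- conclude
  set ζL := IsCyclotomicExtension.zeta np ℚ L with hζL
  have hcon : IsConstructible (f ζL) := by
    refine main j le_rfl ⊥ ?_ ζL ?_
    · simp
    · rintro ⟨g, hg⟩
      have hg1 : g = 1 := Subgroup.mem_bot.mp hg
      subst hg1
      show (1 : L ≃ₐ[ℚ] L) ζL = ζL
      rfl
  have hη : IsPrimitiveRoot (f ζL) n :=
    (IsCyclotomicExtension.zeta_spec np ℚ L).map_of_injective
      (show Function.Injective f from f.toRingHom.injective)
  have hζ : IsPrimitiveRoot (Complex.exp (2 * Real.pi * Complex.I / n)) n :=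
    Complex.isPrimitiveRoot_exp n hn.ne'
  obtain ⟨i, _, hi⟩ := hη.eq_pow_of_pow_eq_one hζ.pow_eq_one
  rw [← hi]
  exact hcon.pow i


/-- Gauss–Wantzel: the regular `n`-gon is constructible iff `n` is a power of `2` times a
product of distinct Fermat primes; in particular the regular 17-gon is constructible. -/
theorem stmt_14 :
    (∀ n : ℕ, 0 < n →
      (IsConstructible (Complex.exp (2 * Real.pi * Complex.I / n)) ↔
        ∃ (k : ℕ) (s : Finset ℕ),
          (∀ q ∈ s, Nat.Prime q ∧ ∃ m : ℕ, q = 2 ^ 2 ^ m + 1) ∧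
          n = 2 ^ k * ∏ q ∈ s, q)) ∧
    IsConstructible (Complex.exp (2 * Real.pi * Complex.I / 17)) := by
  have key : ∀ n : ℕ, 0 < n →
      (IsConstructible (Complex.exp (2 * Real.pi * Complex.I / n)) ↔
        ∃ (k : ℕ) (s : Finset ℕ),
          (∀ q ∈ s, Nat.Prime q ∧ ∃ m : ℕ, q = 2 ^ 2 ^ m + 1) ∧
          n = 2 ^ k * ∏ q ∈ s, q) := by
    intro n hn
    constructor
    · intro h
      obtain ⟨hint, j, hdeg⟩ := h.minpoly_natDegree
      have hζ : IsPrimitiveRoot (Complex.exp (2 * Real.pi * Complex.I / n)) n :=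
        Complex.isPrimitiveRoot_exp n hn.ne'
      have hmin : Polynomial.cyclotomic n ℚ =
          minpoly ℚ (Complex.exp (2 * Real.pi * Complex.I / n)) :=
        Polynomial.cyclotomic_eq_minpoly_rat hζ hn
      have htot : Nat.totient n = 2 ^ j := by
        rw [← Polynomial.natDegree_cyclotomic n ℚ, hmin, hdeg]
      exact fermat_of_totient_two_pow hn htot
    · rintro ⟨k, s, hs, hn'⟩
      obtain ⟨j, hj⟩ := totient_eq_two_pow_of_fermat hs hn'
      exact constructible_of_totient_two_pow hn hj
  refine ⟨key, ?_⟩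
  have h17 : Nat.totient 17 = 2 ^ 4 := by
    rw [Nat.totient_prime (by norm_num)]
    norm_num
  have := constructible_of_totient_two_pow (n := 17) (by norm_num) h17
  simpa using this
end

section
/- The angle π/3 cannot be trisected with ruler and compass; equivalently, cos(20°) is not a constructible real number. -/
open IntermediateField Polynomial Module

/-- Quadratic towers over ℚ inside ℂ. -/
inductive QT_s15 : IntermediateField ℚ ℂ → Prop
  | base : QT_s15 ⊥
  | step (K : IntermediateField ℚ ℂ) (a : ℂ) : QT_s15 K → a * a ∈ K →
      QT_s15 ((IntermediateField.adjoin K {a}).restrictScalars ℚ)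

lemma qt_step_le (K : IntermediateField ℚ ℂ) (a : ℂ) :
    K ≤ (IntermediateField.adjoin K {a}).restrictScalars ℚ := by
  erw [restrictScalars_adjoin]
  exact fun x hx => subset_adjoin ℚ _ (Or.inl hx)

lemma qt_step_mem (K : IntermediateField ℚ ℂ) (a : ℂ) :
    a ∈ (IntermediateField.adjoin K {a}).restrictScalars ℚ := by
  erw [restrictScalars_adjoin]
  exact subset_adjoin ℚ _ (Or.inr rfl)

set_option maxHeartbeats 1000000 in
lemma QT_s15.finite {K : IntermediateField ℚ ℂ} (h : QT_s15 K) :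
    FiniteDimensional ℚ K ∧ ∃ n : ℕ, finrank ℚ K = 2 ^ n := by
  induction h with
  | base =>
    refine ⟨inferInstance, 0, ?_⟩
    simp [IntermediateField.finrank_bot]
  | step K a hK ha ih =>
    obtain ⟨hfin, n, hn⟩ := ih
    have hint : IsIntegral K a := by
      refine ⟨X ^ 2 - C (⟨a * a, ha⟩ : K), monic_X_pow_sub_C _ (by norm_num), ?_⟩
      simp [eval₂_sub, sq]
    have hfd : FiniteDimensional K (IntermediateField.adjoin K {a}) :=
      IntermediateField.adjoin.finiteDimensional hint
    have hdeg : finrank K (IntermediateField.adjoin K {a}) ≤ 2 := by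
      rw [IntermediateField.adjoin.finrank hint]
      have hne : (X ^ 2 - C (⟨a * a, ha⟩ : K) : Polynomial K) ≠ 0 := by
        intro h
        have := congrArg natDegree h
        simp [natDegree_X_pow_sub_C] at this
      have hle := minpoly.degree_le_of_ne_zero K a hne (by simp [eval₂_sub, sq])
      have h2 : (X ^ 2 - C (⟨a * a, ha⟩ : K)).degree = 2 := degree_X_pow_sub_C (by norm_num) _
      rw [h2] at hle
      have := natDegree_le_iff_degree_le.mpr hle
      simpa using this
    have hpos : 0 < finrank K (IntermediateField.adjoin K {a}) := finrank_pos
    have hfd' : FiniteDimensional ℚ ((IntermediateField.adjoin K {a}).restrictScalars ℚ) := by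
      change FiniteDimensional ℚ (IntermediateField.adjoin K {a})
      exact FiniteDimensional.trans ℚ K (IntermediateField.adjoin K {a})
    refine ⟨hfd', ?_⟩
    haveI := hfin
    haveI := hfd
    have hmul : finrank ℚ K * finrank K (IntermediateField.adjoin K {a}) =
        finrank ℚ (IntermediateField.adjoin K {a}) :=
      finrank_mul_finrank ℚ K (IntermediateField.adjoin K {a})
    have hres : finrank ℚ ((IntermediateField.adjoin K {a}).restrictScalars ℚ) =
        finrank ℚ (IntermediateField.adjoin K {a}) := rfl
    interval_cases h : finrank K (IntermediateField.adjoin K {a})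
    · exact ⟨n, by rw [hres, ← hmul, hn]; ring⟩
    · exact ⟨n + 1, by rw [hres, ← hmul, hn]; ring⟩

lemma QT_s15.sup {K L : IntermediateField ℚ ℂ} (hK : QT_s15 K) (hL : QT_s15 L) :
    ∃ M : IntermediateField ℚ ℂ, QT_s15 M ∧ K ≤ M ∧ L ≤ M := by
  induction hL with
  | base => exact ⟨K, hK, le_rfl, bot_le⟩
  | step L a hL ha ih =>
    obtain ⟨M, hM, hKM, hLM⟩ := ih
    refine ⟨(IntermediateField.adjoin M {a}).restrictScalars ℚ,
      QT_s15.step M a hM (hLM ha), hKM.trans (qt_step_le M a), ?_⟩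
    erw [restrictScalars_adjoin, restrictScalars_adjoin]
    apply IntermediateField.adjoin_le_iff.mpr
    rintro x (hx | rfl)
    · exact subset_adjoin ℚ _ (Or.inl (hLM hx))
    · exact subset_adjoin ℚ _ (Or.inr rfl)

lemma isConstructible_mem {z : ℂ} (h : IsConstructible z) :
    ∃ K : IntermediateField ℚ ℂ, QT_s15 K ∧ z ∈ K := by
  induction h with
  | base q => exact ⟨⊥, QT_s15.base, ⟨q, rfl⟩⟩
  | add h1 h2 ih1 ih2 =>
    obtain ⟨K, hK, hz⟩ := ih1
    obtain ⟨L, hL, hw⟩ := ih2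
    obtain ⟨M, hM, hKM, hLM⟩ := hK.sup hL
    exact ⟨M, hM, add_mem (hKM hz) (hLM hw)⟩
  | neg h ih =>
    obtain ⟨K, hK, hz⟩ := ih
    exact ⟨K, hK, neg_mem hz⟩
  | mul h1 h2 ih1 ih2 =>
    obtain ⟨K, hK, hz⟩ := ih1
    obtain ⟨L, hL, hw⟩ := ih2
    obtain ⟨M, hM, hKM, hLM⟩ := hK.sup hL
    exact ⟨M, hM, mul_mem (hKM hz) (hLM hw)⟩
  | inv h ih =>
    obtain ⟨K, hK, hz⟩ := ih
    exact ⟨K, hK, inv_mem hz⟩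
  | sqrt h ih =>
    obtain ⟨K, hK, hz2⟩ := ih
    exact ⟨_, QT_s15.step K _ hK hz2, qt_step_mem K _⟩

lemma no_rat_root (x : ℚ) (hroot : x ^ 3 - 3 * x - 1 = 0) : False := by
  have hZ : IsLocalization.IsInteger ℤ x := by
    refine isInteger_of_is_root_of_monic
      (p := (X ^ 3 - C 3 * X - C 1 : Polynomial ℤ)) ?_ ?_
    · monicity!
    · simp only [map_sub, map_mul, map_pow, aeval_X, aeval_C, map_ofNat]
      push_cast
      linarith
  obtain ⟨m, hm⟩ := hZ
  have hx : x = (m : ℚ) := by exact_mod_cast hm.symm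
  rw [hx] at hroot
  have hZroot : m ^ 3 - 3 * m - 1 = 0 := by exact_mod_cast hroot
  have hdvd : m ∣ 1 := ⟨m * m - 3, by linear_combination -hZroot⟩
  rcases Int.isUnit_iff.mp (isUnit_of_dvd_one hdvd) with rfl | rfl <;> norm_num at hZroot

lemma cubic_irreducible : Irreducible (X ^ 3 - 3 * X - 1 : ℚ[X]) := by
  have hdeg : (X ^ 3 - 3 * X - 1 : ℚ[X]).natDegree = 3 := by compute_degree!
  rw [irreducible_iff_roots_eq_zero_of_degree_le_three (by omega) (by omega)]
  rw [Multiset.eq_zero_iff_forall_notMem]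
  intro x hx
  have hne : (X ^ 3 - 3 * X - 1 : ℚ[X]) ≠ 0 := by
    intro h; rw [h] at hdeg; simp at hdeg
  rw [mem_roots hne] at hx
  have hroot : x ^ 3 - 3 * x - 1 = 0 := by
    have := hx
    simp only [IsRoot, eval_sub, eval_mul, eval_pow, eval_X, eval_one, eval_ofNat] at this
    linarith
  exact no_rat_root x hroot

/-- Wantzel: the angle `π/3` cannot be trisected with ruler and compass; equivalently,
`cos 20° = cos (π/9)` is not a constructible number. -/
theorem stmt_15 : ¬ IsConstructible ((Real.cos (Real.pi / 9) : ℝ) : ℂ) := by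
  intro h
  set z : ℂ := ((Real.cos (Real.pi / 9) : ℝ) : ℂ) with hz
  have hw : IsConstructible (z + z) := IsConstructible.add h h
  obtain ⟨K, hK, hmem⟩ := isConstructible_mem hw
  obtain ⟨hfin, n, hn⟩ := hK.finite
  have hcos : Real.cos (3 * (Real.pi / 9)) = 4 * Real.cos (Real.pi / 9) ^ 3
      - 3 * Real.cos (Real.pi / 9) := Real.cos_three_mul _
  have h3 : (3 : ℝ) * (Real.pi / 9) = Real.pi / 3 := by ring
  rw [h3, Real.cos_pi_div_three] at hcos
  have hrootR : (2 * Real.cos (Real.pi / 9)) ^ 3 - 3 * (2 * Real.cos (Real.pi / 9)) - 1 = 0 := by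
    nlinarith [hcos]
  have hroot : aeval (z + z) (X ^ 3 - 3 * X - 1 : ℚ[X]) = 0 := by
    simp only [map_sub, map_pow, map_mul, aeval_X, map_one, map_ofNat]
    have hzz : z + z = ((2 * Real.cos (Real.pi / 9) : ℝ) : ℂ) := by
      push_cast [hz]; ring
    rw [hzz]
    exact_mod_cast congrArg (Complex.ofReal) hrootR
  have hmonic : (X ^ 3 - 3 * X - 1 : ℚ[X]).Monic := by monicity!
  have hmin : minpoly ℚ (z + z) = X ^ 3 - 3 * X - 1 :=
    (minpoly.eq_of_irreducible_of_monic cubic_irreducible hroot hmonic).symm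
  have hdvd : (minpoly ℚ (z + z)).natDegree ∣ finrank ℚ K := by
    have heq := minpoly.algebraMap_eq (A := ℚ) (algebraMap K ℂ).injective (⟨z + z, hmem⟩ : K)
    rw [show (algebraMap K ℂ) (⟨z + z, hmem⟩ : K) = z + z from rfl] at heq
    rw [heq]
    exact minpoly.degree_dvd (IsIntegral.of_finite ℚ _)
  rw [hmin, hn] at hdvd
  have hdeg : (X ^ 3 - 3 * X - 1 : ℚ[X]).natDegree = 3 := by compute_degree!
  rw [hdeg] at hdvd
  have h35 := Nat.Prime.dvd_of_dvd_pow (p := 3) (by norm_num) hdvd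
  norm_num at h35
end
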